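/- Let φ₁, …, φ_m ∈ L²_loc(ℝⁿ) be linearly independent solutions of (-Δ + V₁)φ_j = 0 where V₁ ∈ L^p_loc (p = n/2, n ≥ 3) satisfies a unique continuation principle, and let V₂ ≥ 0, V₂ ≠ 0 be measurable. Then the Gram-type matrix (v_{jk}) with v_{jk} = ⟨φ_j, V₂ φ_k⟩ is positive definite, provided it is finite. -/

import Mathlib

open MeasureTheory Complex Real Filter Metric
open scoped ENNReal SchwartzMap FourierTransform ComplexOrder

noncomputable section

abbrev Euc (n : ℕ) := EuclideanSpace ℝ (Fin n)

/-- The classical Laplacian of `u`. -/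
def lap {n : ℕ} (u : Euc n → ℂ) (x : Euc n) : ℂ :=
  ∑ i, fderiv ℝ (fun y => fderiv ℝ u y (EuclideanSpace.single i 1)) x
    (EuclideanSpace.single i 1)

/-- The japanese bracket `⟨x⟩ = (1 + |x|²)^{1/2}`. -/
def jap {n : ℕ} (x : Euc n) : ℝ := Real.sqrt (1 + ‖x‖ ^ 2)

/-- `V` is relatively `Δ`-compact (sequential form). -/
def DeltaCompact {n : ℕ} (V : Euc n → ℂ) : Prop :=
  ∀ u : ℕ → Euc n → ℂ, (∀ k, ContDiff ℝ 2 (u k)) →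
    (∃ C : ℝ≥0∞, C ≠ ⊤ ∧ ∀ k, eLpNorm (u k) 2 volume ≤ C ∧
      eLpNorm (lap (u k)) 2 volume ≤ C) →
    ∃ (φ : ℕ → ℕ) (g : Euc n → ℂ), StrictMono φ ∧
      Tendsto (fun k => eLpNorm (fun x => V x * u (φ k) x - g x) 2 volume) atTop (nhds 0)


lemma lap_sum_aux {n m : ℕ} (c : Fin m → ℂ) (f : Fin m → Euc n → ℂ)
    (hf : ∀ j, ContDiff ℝ 2 (f j)) (x : Euc n) :
    lap (fun y => ∑ j, c j * f j y) x = ∑ j, c j * lap (f j) x := by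
  have hf2 : ∀ j, ContDiff ℝ ((1 : WithTop ℕ∞) + 1) (f j) := fun j => by
    exact_mod_cast hf j
  have hdf : ∀ j, Differentiable ℝ (f j) := fun j =>
    (contDiff_succ_iff_fderiv.mp (hf2 j)).1
  have hf1 : ∀ j, ContDiff ℝ 1 (fderiv ℝ (f j)) := fun j =>
    (contDiff_succ_iff_fderiv.mp (hf2 j)).2.2
  have hstep : ∀ (i : Fin n),
      fderiv ℝ (fun y => fderiv ℝ (fun z => ∑ j, c j * f j z) y (EuclideanSpace.single i 1)) x
        (EuclideanSpace.single i 1)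
      = ∑ j, c j * fderiv ℝ (fun y => fderiv ℝ (f j) y (EuclideanSpace.single i 1)) x
          (EuclideanSpace.single i 1) := by
    intro i
    have h1 : (fun y => fderiv ℝ (fun z => ∑ j, c j * f j z) y (EuclideanSpace.single i 1))
        = fun y => ∑ j, c j * fderiv ℝ (f j) y (EuclideanSpace.single i 1) := by
      funext y
      have : fderiv ℝ (fun z => ∑ j, c j * f j z) y = ∑ j, c j • fderiv ℝ (f j) y := by
        rw [fderiv_fun_sum (fun j _ => ((hdf j y).const_mul (c j)))]
        exact Finset.sum_congr rfl fun j _ => fderiv_const_mul (hdf j y) (c j)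
      rw [this]
      simp [ContinuousLinearMap.sum_apply]
    rw [h1]
    have hdg : ∀ j, DifferentiableAt ℝ
        (fun y => fderiv ℝ (f j) y (EuclideanSpace.single i 1)) x :=
      fun j => ((hf1 j).differentiable one_ne_zero x).clm_apply (differentiableAt_const _)
    rw [fderiv_fun_sum (fun j _ => (hdg j).const_mul (c j))]
    rw [ContinuousLinearMap.sum_apply]
    exact Finset.sum_congr rfl fun j _ => by
      rw [fderiv_const_mul (hdg j) (c j)]; simp
  unfold lap
  rw [Finset.sum_congr rfl fun i _ => hstep i, Finset.sum_comm]
  exact Finset.sum_congr rfl fun j _ => by rw [Finset.mul_sum]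

/-- The Gram-type matrix `v_{jk} = ⟨φ_j, V₂ φ_k⟩` of linearly independent solutions of
`(-Δ + V₁)φ = 0` is positive definite when `V₂ ≥ 0`, `V₂ ≠ 0`, assuming unique
continuation for `-Δ + V₁` and finiteness of the entries. -/
theorem stmt9 (n : ℕ) (hn : 3 ≤ n) (m : ℕ) (V₁ V₂ : Euc n → ℝ)
    (hV₁loc : ∀ K : Set (Euc n), IsCompact K →
      MemLp V₁ (ENNReal.ofReal ((n : ℝ) / 2)) (volume.restrict K))
    (hUCP : ∀ ψ : Euc n → ℂ, ContDiff ℝ 2 ψ → (∀ x, lap ψ x = (V₁ x : ℂ) * ψ x) →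
      0 < volume {x | ψ x = 0} → ∀ x, ψ x = 0)
    (hV₂meas : Measurable V₂) (hV₂pos : ∀ x, 0 ≤ V₂ x)
    (hV₂ne : ¬ (∀ᵐ x ∂(volume : Measure (Euc n)), V₂ x = 0))
    (φ : Fin m → Euc n → ℂ) (hφreg : ∀ j, ContDiff ℝ 2 (φ j))
    (hφloc : ∀ j, ∀ K : Set (Euc n), IsCompact K → MemLp (φ j) 2 (volume.restrict K))
    (hφeq : ∀ j, ∀ x, lap (φ j) x = (V₁ x : ℂ) * φ j x)
    (hφind : LinearIndependent ℂ φ)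
    (hfin : ∀ j k, Integrable (fun x => (starRingEnd ℂ) (φ j x) * (V₂ x : ℂ) * φ k x) volume) :
    Matrix.PosDef (Matrix.of fun j k : Fin m =>
      ∫ x, (starRingEnd ℂ) (φ j x) * (V₂ x : ℂ) * φ k x) := by
  set M : Matrix (Fin m) (Fin m) ℂ := Matrix.of fun j k : Fin m =>
      ∫ x, (starRingEnd ℂ) (φ j x) * (V₂ x : ℂ) * φ k x with hM
  rw [Matrix.posDef_iff_dotProduct_mulVec]
  constructor
  · -- Hermitian
    ext j k
    simp only [Matrix.conjTranspose_apply, hM, Matrix.of_apply]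
    rw [RCLike.star_def, ← integral_conj]
    congr 1
    funext x
    simp only [map_mul, Complex.conj_conj, Complex.conj_ofReal]
    ring
  · intro d hd
    set ψ : Euc n → ℂ := fun x => ∑ j, d j * φ j x with hψdef
    -- expand the quadratic form
    have hterm : ∀ x, (starRingEnd ℂ) (ψ x) * (V₂ x : ℂ) * ψ x
        = ∑ j, ∑ k, ((starRingEnd ℂ) (d j) * d k) *
            ((starRingEnd ℂ) (φ j x) * (V₂ x : ℂ) * φ k x) := by
      intro x
      simp only [hψdef, map_sum, map_mul, Finset.sum_mul, Finset.mul_sum]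
      rw [Finset.sum_comm]
      exact Finset.sum_congr rfl fun j _ => Finset.sum_congr rfl fun k _ => by ring
    have hInt : Integrable (fun x => (starRingEnd ℂ) (ψ x) * (V₂ x : ℂ) * ψ x) volume := by
      rw [show (fun x => (starRingEnd ℂ) (ψ x) * (V₂ x : ℂ) * ψ x)
          = fun x => ∑ j, ∑ k, ((starRingEnd ℂ) (d j) * d k) *
            ((starRingEnd ℂ) (φ j x) * (V₂ x : ℂ) * φ k x) from funext hterm]
      exact integrable_finset_sum _ fun j _ => integrable_finset_sum _ fun k _ =>
        (hfin j k).const_mul _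
    have hquad : dotProduct (star d) (M.mulVec d)
        = ∫ x, (starRingEnd ℂ) (ψ x) * (V₂ x : ℂ) * ψ x := by
      rw [show (∫ x, (starRingEnd ℂ) (ψ x) * (V₂ x : ℂ) * ψ x)
          = ∫ x, ∑ j, ∑ k, ((starRingEnd ℂ) (d j) * d k) *
            ((starRingEnd ℂ) (φ j x) * (V₂ x : ℂ) * φ k x) from by
            exact congrArg _ (funext hterm)]
      rw [integral_finset_sum _ fun j _ => integrable_finset_sum _ fun k _ =>
        (hfin j k).const_mul _]
      simp only [dotProduct, Matrix.mulVec, dotProduct, Pi.star_apply, hM,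
        Matrix.of_apply, Finset.mul_sum]
      refine Finset.sum_congr rfl fun j _ => ?_
      rw [integral_finset_sum _ fun k _ => (hfin j k).const_mul _]
      refine Finset.sum_congr rfl fun k _ => ?_
      rw [MeasureTheory.integral_const_mul]
      simp only [RCLike.star_def]
      ring
    -- the integrand is a nonnegative real
    have hre : ∀ x, (starRingEnd ℂ) (ψ x) * (V₂ x : ℂ) * ψ x
        = ((V₂ x * Complex.normSq (ψ x) : ℝ) : ℂ) := by
      intro x
      rw [show (starRingEnd ℂ) (ψ x) * (V₂ x : ℂ) * ψ x
          = (V₂ x : ℂ) * (ψ x * (starRingEnd ℂ) (ψ x)) from by ring, Complex.mul_conj]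
      push_cast
      ring
    have hIntR : Integrable (fun x => V₂ x * Complex.normSq (ψ x)) volume := by
      have := hInt.re
      refine this.congr (Filter.Eventually.of_forall fun x => ?_)
      simp only [hre x]
      simp
    have hquadR : dotProduct (star d) (M.mulVec d) = Complex.ofReal (∫ x, V₂ x * Complex.normSq (ψ x)) := by
      rw [hquad, show (fun x => (starRingEnd ℂ) (ψ x) * (V₂ x : ℂ) * ψ x)
        = fun x => ((V₂ x * Complex.normSq (ψ x) : ℝ) : ℂ) from funext hre]
      exact integral_ofReal
    rw [hquadR]
    rw [Complex.zero_lt_real]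
    have hnonneg : 0 ≤ ∫ x, V₂ x * Complex.normSq (ψ x) :=
      integral_nonneg fun x => mul_nonneg (hV₂pos x) (Complex.normSq_nonneg _)
    rcases hnonneg.lt_or_eq with h | h
    · exact h
    exfalso
    -- integral zero: integrand vanishes a.e.
    have hae : (fun x => V₂ x * Complex.normSq (ψ x)) =ᵐ[volume] 0 :=
      (integral_eq_zero_iff_of_nonneg
        (fun x => mul_nonneg (hV₂pos x) (Complex.normSq_nonneg _)) hIntR).mp h.symm
    have hae' : ∀ᵐ x ∂(volume : Measure (Euc n)), V₂ x = 0 ∨ ψ x = 0 := by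
      filter_upwards [hae] with x hx
      rcases mul_eq_zero.mp hx with h0 | h0
      · exact Or.inl h0
      · exact Or.inr (Complex.normSq_eq_zero.mp h0)
    -- the zero set of ψ has positive measure
    have hpos : 0 < volume {x : Euc n | ψ x = 0} := by
      have h1 : volume {x : Euc n | ¬ V₂ x = 0} ≠ 0 := by
        intro h0; exact hV₂ne (ae_iff.mpr h0)
      have hsub : {x : Euc n | ¬ V₂ x = 0} ≤ᵐ[volume] {x : Euc n | ψ x = 0} := by
        filter_upwards [hae'] with x hx
        intro hxs
        exact hx.resolve_left hxs
      have := measure_mono_ae hsub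
      exact lt_of_lt_of_le (pos_iff_ne_zero.mpr h1) this
    -- unique continuation kills ψ
    have hψreg : ContDiff ℝ 2 ψ :=
      ContDiff.sum fun j _ => contDiff_const.mul (hφreg j)
    have hψeq : ∀ x, lap ψ x = (V₁ x : ℂ) * ψ x := by
      intro x
      rw [hψdef]
      rw [lap_sum_aux d φ hφreg x]
      simp only [hφeq]
      rw [Finset.mul_sum]
      exact Finset.sum_congr rfl fun j _ => by ring
    have hzero : ∀ x, ψ x = 0 := hUCP ψ hψreg hψeq hpos
    have : ∀ j, d j = 0 := by
      refine Fintype.linearIndependent_iff.mp hφind d ?_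
      funext x
      simpa [hψdef] using hzero x
    exact hd (funext this)
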